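/- Let Q(x,u,v,y) be a polynomial that is affine linear in each of its four arguments (so Q_uu = 0, Q_vv = 0, Q_yy = 0, etc.). Then the three 'discriminant-like' expressions coincide: the discriminant in u of g(x,u) = Q·Q_yv − Q_y·Q_v, the discriminant in v of ḡ(x,v) = Q·Q_yu − Q_y·Q_u, and the discriminant in y of G(x,y) = Q·Q_uv − Q_u·Q_v are all equal, i.e. g_u² − 2g·g_uu = ḡ_v² − 2ḡ·ḡ_vv = G_y² − 2G·G_yy. -/
import Mathlib


/-- Partial derivative of a function of four complex variables in the first
argument. -/
noncomputable def pdX (f : ℂ → ℂ → ℂ → ℂ → ℂ) : ℂ → ℂ → ℂ → ℂ → ℂ :=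
  fun x u v y => deriv (fun t => f t u v y) x

/-- Partial derivative in the second argument. -/
noncomputable def pdU (f : ℂ → ℂ → ℂ → ℂ → ℂ) : ℂ → ℂ → ℂ → ℂ → ℂ :=
  fun x u v y => deriv (fun t => f x t v y) u

/-- Partial derivative in the third argument. -/
noncomputable def pdV (f : ℂ → ℂ → ℂ → ℂ → ℂ) : ℂ → ℂ → ℂ → ℂ → ℂ :=
  fun x u v y => deriv (fun t => f x u t y) v

/-- Partial derivative in the fourth argument. -/
noncomputable def pdY (f : ℂ → ℂ → ℂ → ℂ → ℂ) : ℂ → ℂ → ℂ → ℂ → ℂ :=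
  fun x u v y => deriv (fun t => f x u v t) y

/-- The biquadratic `g(x,u) = Q·Q_yv − Q_y·Q_v` associated to the edge `(x,u)`. -/
noncomputable def edgeG (Q : ℂ → ℂ → ℂ → ℂ → ℂ) : ℂ → ℂ → ℂ → ℂ → ℂ :=
  fun x u v y => Q x u v y * pdV (pdY Q) x u v y - pdY Q x u v y * pdV Q x u v y

/-- The biquadratic `ḡ(x,v) = Q·Q_yu − Q_y·Q_u` associated to the edge `(x,v)`. -/
noncomputable def edgeGbar (Q : ℂ → ℂ → ℂ → ℂ → ℂ) : ℂ → ℂ → ℂ → ℂ → ℂ :=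
  fun x u v y => Q x u v y * pdU (pdY Q) x u v y - pdY Q x u v y * pdU Q x u v y

/-- The biquadratic `G(x,y) = Q·Q_uv − Q_u·Q_v` associated to the diagonal `(x,y)`. -/
noncomputable def diagG (Q : ℂ → ℂ → ℂ → ℂ → ℂ) : ℂ → ℂ → ℂ → ℂ → ℂ :=
  fun x u v y => Q x u v y * pdU (pdV Q) x u v y - pdU Q x u v y * pdV Q x u v y

/-- Discriminant `f_u² − 2 f·f_uu` with respect to the second argument. -/
noncomputable def discU (f : ℂ → ℂ → ℂ → ℂ → ℂ) : ℂ → ℂ → ℂ → ℂ → ℂ :=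
  fun x u v y => (pdU f x u v y) ^ 2 - 2 * f x u v y * pdU (pdU f) x u v y

/-- Discriminant with respect to the third argument. -/
noncomputable def discV (f : ℂ → ℂ → ℂ → ℂ → ℂ) : ℂ → ℂ → ℂ → ℂ → ℂ :=
  fun x u v y => (pdV f x u v y) ^ 2 - 2 * f x u v y * pdV (pdV f) x u v y

/-- Discriminant with respect to the fourth argument. -/
noncomputable def discY (f : ℂ → ℂ → ℂ → ℂ → ℂ) : ℂ → ℂ → ℂ → ℂ → ℂ :=
  fun x u v y => (pdY f x u v y) ^ 2 - 2 * f x u v y * pdY (pdY f) x u v y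


private lemma deriv_linear' (a b t : ℂ) : deriv (fun s => a*s + b) t = a := by
  have h : HasDerivAt (fun s : ℂ => a*s + b) (a*1) t :=
    ((hasDerivAt_id t).const_mul a).add_const b
  simpa using h.deriv

private lemma deriv_quad' (a b c t : ℂ) :
    deriv (fun s => a*s^2 + b*s + c) t = 2*a*t + b := by
  have h : HasDerivAt (fun s : ℂ => a*s^2 + b*s + c)
      (a*((2:ℕ)*t^(2-1)) + b*1) t :=
    (((hasDerivAt_pow 2 t).const_mul a).add ((hasDerivAt_id t).const_mul b)).add_const c
  rw [h.deriv]; ring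

/-- Lemma on coinciding discriminants: for a polynomial `Q(x,u,v,y)` which is
affine linear in each of its four arguments, the discriminants (in `u`, `v`, `y`
respectively) of `g = Q·Q_yv − Q_y·Q_v`, `ḡ = Q·Q_yu − Q_y·Q_u` and
`G = Q·Q_uv − Q_u·Q_v` all coincide. -/
theorem discriminants_coincide
    (Q : ℂ → ℂ → ℂ → ℂ → ℂ)
    (hQ : ∃ c1 c2 c3 c4 c5 c6 c7 c8 c9 c10 c11 c12 c13 c14 c15 c16 : ℂ,
      ∀ x u v y : ℂ, Q x u v y =
        c1*x*u*v*y + c2*x*u*v + c3*x*u*y + c4*x*v*y + c5*u*v*y +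
        c6*x*u + c7*x*v + c8*x*y + c9*u*v + c10*u*y + c11*v*y +
        c12*x + c13*u + c14*v + c15*y + c16) :
    ∀ x u v y : ℂ,
      discU (edgeG Q) x u v y = discV (edgeGbar Q) x u v y ∧
      discV (edgeGbar Q) x u v y = discY (diagG Q) x u v y := by
  obtain ⟨c1, c2, c3, c4, c5, c6, c7, c8, c9, c10, c11, c12, c13, c14, c15, c16, h⟩ := hQ
  have hY : ∀ x u v y : ℂ, pdY Q x u v y = c15 + c11*v + c10*u + c8*x + c5*u*v + c4*x*v + c3*x*u + c1*x*u*v := by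
    intro x u v y
    have e : (fun t : ℂ => Q x u v t) = fun t => (c15 + c11*v + c10*u + c8*x + c5*u*v + c4*x*v + c3*x*u + c1*x*u*v)*t + (c16 + c14*v + c13*u + c12*x + c9*u*v + c7*x*v + c6*x*u + c2*x*u*v) :=
      funext fun t => by rw [h]; ring
    show deriv (fun t : ℂ => Q x u v t) _ = _
    rw [e, deriv_linear']
  have hU : ∀ x u v y : ℂ, pdU Q x u v y = c13 + c10*y + c9*v + c6*x + c5*v*y + c3*x*y + c2*x*v + c1*x*v*y := by
    intro x u v y
    have e : (fun t : ℂ => Q x t v y) = fun t => (c13 + c10*y + c9*v + c6*x + c5*v*y + c3*x*y + c2*x*v + c1*x*v*y)*t + (c16 + c15*y + c14*v + c12*x + c11*v*y + c8*x*y + c7*x*v + c4*x*v*y) :=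
      funext fun t => by rw [h]; ring
    show deriv (fun t : ℂ => Q x t v y) _ = _
    rw [e, deriv_linear']
  have hV : ∀ x u v y : ℂ, pdV Q x u v y = c14 + c11*y + c9*u + c7*x + c5*u*y + c4*x*y + c2*x*u + c1*x*u*y := by
    intro x u v y
    have e : (fun t : ℂ => Q x u t y) = fun t => (c14 + c11*y + c9*u + c7*x + c5*u*y + c4*x*y + c2*x*u + c1*x*u*y)*t + (c16 + c15*y + c13*u + c12*x + c10*u*y + c8*x*y + c6*x*u + c3*x*u*y) :=
      funext fun t => by rw [h]; ring
    show deriv (fun t : ℂ => Q x u t y) _ = _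
    rw [e, deriv_linear']
  have hYV : ∀ x u v y : ℂ, pdV (pdY Q) x u v y = c11 + c5*u + c4*x + c1*x*u := by
    intro x u v y
    have e : (fun t : ℂ => pdY Q x u t y) = fun t => (c11 + c5*u + c4*x + c1*x*u)*t + (c15 + c10*u + c8*x + c3*x*u) :=
      funext fun t => by rw [hY]; ring
    show deriv (fun t : ℂ => pdY Q x u t y) _ = _
    rw [e, deriv_linear']
  have hYU : ∀ x u v y : ℂ, pdU (pdY Q) x u v y = c10 + c5*v + c3*x + c1*x*v := by
    intro x u v y
    have e : (fun t : ℂ => pdY Q x t v y) = fun t => (c10 + c5*v + c3*x + c1*x*v)*t + (c15 + c11*v + c8*x + c4*x*v) :=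
      funext fun t => by rw [hY]; ring
    show deriv (fun t : ℂ => pdY Q x t v y) _ = _
    rw [e, deriv_linear']
  have hVU : ∀ x u v y : ℂ, pdU (pdV Q) x u v y = c9 + c5*y + c2*x + c1*x*y := by
    intro x u v y
    have e : (fun t : ℂ => pdV Q x t v y) = fun t => (c9 + c5*y + c2*x + c1*x*y)*t + (c14 + c11*y + c7*x + c4*x*y) :=
      funext fun t => by rw [hV]; ring
    show deriv (fun t : ℂ => pdV Q x t v y) _ = _
    rw [e, deriv_linear']
  have hg : ∀ x u v y : ℂ, edgeG Q x u v y = -c14*c15 + c11*c16 + c11*c13*u + c11*c12*x - c10*c14*u - c9*c15*u - c9*c10*u*u - c8*c14*x - c8*c9*x*u - c7*c15*x - c7*c10*x*u - c7*c8*x*x + c6*c11*x*u + c5*c16*u + c5*c13*u*u + c5*c12*x*u + c5*c6*x*u*u + c4*c16*x + c4*c13*x*u + c4*c12*x*x + c4*c6*x*x*u - c3*c14*x*u - c3*c9*x*u*u - c3*c7*x*x*u - c2*c15*x*u - c2*c10*x*u*u - c2*c8*x*x*u - c2*c3*x*x*u*u + c1*c16*x*u + c1*c13*x*u*u + c1*c12*x*x*u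 + c1*c6*x*x*u*u := by
    intro x u v y
    simp only [edgeG]
    rw [h, hYV, hY, hV]; ring
  have hgb : ∀ x u v y : ℂ, edgeGbar Q x u v y = -c13*c15 - c11*c13*v + c10*c16 + c10*c14*v + c10*c12*x - c9*c15*v - c9*c11*v*v - c8*c13*x - c8*c9*x*v + c7*c10*x*v - c6*c15*x - c6*c11*x*v - c6*c8*x*x + c5*c16*v + c5*c14*v*v + c5*c12*x*v + c5*c7*x*v*v - c4*c13*x*v - c4*c9*x*v*v - c4*c6*x*x*v + c3*c16*x + c3*c14*x*v + c3*c12*x*x + c3*c7*x*x*v - c2*c15*x*v - c2*c11*x*v*v - c2*c8*x*x*v - c2*c4*x*x*v*v + c1*c16*x*v + c1*c14*x*v*v + c1*c12*x*x*v + c1*c7*x*x*v*v := by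
    intro x u v y
    simp only [edgeGbar]
    rw [h, hYU, hY, hU]; ring
  have hG : ∀ x u v y : ℂ, diagG Q x u v y = -c13*c14 - c11*c13*y - c10*c14*y - c10*c11*y*y + c9*c16 + c9*c15*y + c9*c12*x + c8*c9*x*y - c7*c13*x - c7*c10*x*y - c6*c14*x - c6*c11*x*y - c6*c7*x*x + c5*c16*y + c5*c15*y*y + c5*c12*x*y + c5*c8*x*y*y - c4*c13*x*y - c4*c10*x*y*y - c4*c6*x*x*y - c3*c14*x*y - c3*c11*x*y*y - c3*c7*x*x*y - c3*c4*x*x*y*y + c2*c16*x + c2*c15*x*y + c2*c12*x*x + c2*c8*x*x*y + c1*c16*x*y + c1*c15*x*y*y + c1*c12*x*x*y + c1*c8*x*x*y*y := by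
    intro x u v y
    simp only [diagG]
    rw [h, hVU, hU, hV]; ring
  have hgU : ∀ x u v y : ℂ, pdU (edgeG Q) x u v y = 2*(-c9*c10 + c5*c13 + c5*c6*x - c3*c9*x - c2*c10*x - c2*c3*x*x + c1*c13*x + c1*c6*x*x)*u + (c11*c13 - c10*c14 - c9*c15 - c8*c9*x - c7*c10*x + c6*c11*x + c5*c16 + c5*c12*x + c4*c13*x + c4*c6*x*x - c3*c14*x - c3*c7*x*x - c2*c15*x - c2*c8*x*x + c1*c16*x + c1*c12*x*x) := by
    intro x u v y
    have e : (fun t : ℂ => edgeG Q x t v y) = fun t => (-c9*c10 + c5*c13 + c5*c6*x - c3*c9*x - c2*c10*x - c2*c3*x*x + c1*c13*x + c1*c6*x*x)*t^2 + (c11*c13 - c10*c14 - c9*c15 - c8*c9*x - c7*c10*x + c6*c11*x + c5*c16 + c5*c12*x + c4*c13*x + c4*c6*x*x - c3*c14*x - c3*c7*x*x - c2*c15*x - c2*c8*x*x + c1*c16*x + c1*c12*x*x)*t + (-c14*c15 + c11*c16 + c11*c12*x - c8*c14*x - c7*c15*x - c7*c8*x*x + c4*c16*x + c4*c12*x*x)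 :=
      funext fun t => by rw [hg]; ring
    show deriv (fun t : ℂ => edgeG Q x t v y) _ = _
    rw [e, deriv_quad']
  have hgUU : ∀ x u v y : ℂ, pdU (pdU (edgeG Q)) x u v y = 2*(-c9*c10 + c5*c13 + c5*c6*x - c3*c9*x - c2*c10*x - c2*c3*x*x + c1*c13*x + c1*c6*x*x) := by
    intro x u v y
    have e : (fun t : ℂ => pdU (edgeG Q) x t v y) = fun t => (2*(-c9*c10 + c5*c13 + c5*c6*x - c3*c9*x - c2*c10*x - c2*c3*x*x + c1*c13*x + c1*c6*x*x))*t + (c11*c13 - c10*c14 - c9*c15 - c8*c9*x - c7*c10*x + c6*c11*x + c5*c16 + c5*c12*x + c4*c13*x + c4*c6*x*x - c3*c14*x - c3*c7*x*x - c2*c15*x - c2*c8*x*x + c1*c16*x + c1*c12*x*x) :=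
      funext fun t => by rw [hgU]
    show deriv (fun t : ℂ => pdU (edgeG Q) x t v y) _ = _
    rw [e, deriv_linear']
  have hgbV : ∀ x u v y : ℂ, pdV (edgeGbar Q) x u v y = 2*(-c9*c11 + c5*c14 + c5*c7*x - c4*c9*x - c2*c11*x - c2*c4*x*x + c1*c14*x + c1*c7*x*x)*v + (-c11*c13 + c10*c14 - c9*c15 - c8*c9*x + c7*c10*x - c6*c11*x + c5*c16 + c5*c12*x - c4*c13*x - c4*c6*x*x + c3*c14*x + c3*c7*x*x - c2*c15*x - c2*c8*x*x + c1*c16*x + c1*c12*x*x) := by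
    intro x u v y
    have e : (fun t : ℂ => edgeGbar Q x u t y) = fun t => (-c9*c11 + c5*c14 + c5*c7*x - c4*c9*x - c2*c11*x - c2*c4*x*x + c1*c14*x + c1*c7*x*x)*t^2 + (-c11*c13 + c10*c14 - c9*c15 - c8*c9*x + c7*c10*x - c6*c11*x + c5*c16 + c5*c12*x - c4*c13*x - c4*c6*x*x + c3*c14*x + c3*c7*x*x - c2*c15*x - c2*c8*x*x + c1*c16*x + c1*c12*x*x)*t + (-c13*c15 + c10*c16 + c10*c12*x - c8*c13*x - c6*c15*x - c6*c8*x*x + c3*c16*x + c3*c12*x*x) :=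
      funext fun t => by rw [hgb]; ring
    show deriv (fun t : ℂ => edgeGbar Q x u t y) _ = _
    rw [e, deriv_quad']
  have hgbVV : ∀ x u v y : ℂ, pdV (pdV (edgeGbar Q)) x u v y = 2*(-c9*c11 + c5*c14 + c5*c7*x - c4*c9*x - c2*c11*x - c2*c4*x*x + c1*c14*x + c1*c7*x*x) := by
    intro x u v y
    have e : (fun t : ℂ => pdV (edgeGbar Q) x u t y) = fun t => (2*(-c9*c11 + c5*c14 + c5*c7*x - c4*c9*x - c2*c11*x - c2*c4*x*x + c1*c14*x + c1*c7*x*x))*t + (-c11*c13 + c10*c14 - c9*c15 - c8*c9*x + c7*c10*x - c6*c11*x + c5*c16 + c5*c12*x - c4*c13*x - c4*c6*x*x + c3*c14*x + c3*c7*x*x - c2*c15*x - c2*c8*x*x + c1*c16*x + c1*c12*x*x) :=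
      funext fun t => by rw [hgbV]
    show deriv (fun t : ℂ => pdV (edgeGbar Q) x u t y) _ = _
    rw [e, deriv_linear']
  have hGY : ∀ x u v y : ℂ, pdY (diagG Q) x u v y = 2*(-c10*c11 + c5*c15 + c5*c8*x - c4*c10*x - c3*c11*x - c3*c4*x*x + c1*c15*x + c1*c8*x*x)*y + (-c11*c13 - c10*c14 + c9*c15 + c8*c9*x - c7*c10*x - c6*c11*x + c5*c16 + c5*c12*x - c4*c13*x - c4*c6*x*x - c3*c14*x - c3*c7*x*x + c2*c15*x + c2*c8*x*x + c1*c16*x + c1*c12*x*x) := by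
    intro x u v y
    have e : (fun t : ℂ => diagG Q x u v t) = fun t => (-c10*c11 + c5*c15 + c5*c8*x - c4*c10*x - c3*c11*x - c3*c4*x*x + c1*c15*x + c1*c8*x*x)*t^2 + (-c11*c13 - c10*c14 + c9*c15 + c8*c9*x - c7*c10*x - c6*c11*x + c5*c16 + c5*c12*x - c4*c13*x - c4*c6*x*x - c3*c14*x - c3*c7*x*x + c2*c15*x + c2*c8*x*x + c1*c16*x + c1*c12*x*x)*t + (-c13*c14 + c9*c16 + c9*c12*x - c7*c13*x - c6*c14*x - c6*c7*x*x + c2*c16*x + c2*c12*x*x) :=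
      funext fun t => by rw [hG]; ring
    show deriv (fun t : ℂ => diagG Q x u v t) _ = _
    rw [e, deriv_quad']
  have hGYY : ∀ x u v y : ℂ, pdY (pdY (diagG Q)) x u v y = 2*(-c10*c11 + c5*c15 + c5*c8*x - c4*c10*x - c3*c11*x - c3*c4*x*x + c1*c15*x + c1*c8*x*x) := by
    intro x u v y
    have e : (fun t : ℂ => pdY (diagG Q) x u v t) = fun t => (2*(-c10*c11 + c5*c15 + c5*c8*x - c4*c10*x - c3*c11*x - c3*c4*x*x + c1*c15*x + c1*c8*x*x))*t + (-c11*c13 - c10*c14 + c9*c15 + c8*c9*x - c7*c10*x - c6*c11*x + c5*c16 + c5*c12*x - c4*c13*x - c4*c6*x*x - c3*c14*x - c3*c7*x*x + c2*c15*x + c2*c8*x*x + c1*c16*x + c1*c12*x*x) :=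
      funext fun t => by rw [hGY]
    show deriv (fun t : ℂ => pdY (diagG Q) x u v t) _ = _
    rw [e, deriv_linear']
  intro x u v y
  simp only [discU, discV, discY]
  rw [hgU, hgUU, hg, hgbV, hgbVV, hgb, hGY, hGYY, hG]
  constructor <;> ring
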